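/- Let $L$ be a finite set of positive integers with smallest even element $2\ell$. There exists a constant $c = c(L)$ such that in every simple undirected graph $G$ whose cycle lengths all belong to $L$, for any two vertices $x, y$ and any $1 \le j \le \ell - 1$, the number of $x$–$y$ paths of length $j$ in $G$ is less than $c$. -/

import Mathlib

def IsCycleEdges {V : Type*} [DecidableEq V] (G : SimpleGraph V)
    (s : Finset (Sym2 V)) (len : ℕ) : Prop :=
  ∃ m : ℕ, len = m + 3 ∧ ∃ f : ZMod (m + 3) → V, Function.Injective f ∧
    (∀ i, G.Adj (f i) (f (i + 1))) ∧
    s = Finset.image (fun i => s(f i, f (i + 1))) Finset.univ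



def pathSet {V : Type} (G : SimpleGraph V) (j : ℕ) (x y : V) : Set (Fin (j+1) → V) :=
  {f | Function.Injective f ∧ f 0 = x ∧ f (Fin.last j) = y ∧
    ∀ i : Fin j, G.Adj (f i.castSucc) (f i.succ)}

lemma path_adj {V : Type} {G : SimpleGraph V} {j : ℕ} {f : Fin (j+1) → V}
    (h : ∀ i : Fin j, G.Adj (f i.castSucc) (f i.succ)) {k : ℕ} (hk : k < j) :
    G.Adj (f ⟨k, by omega⟩) (f ⟨k + 1, by omega⟩) := h ⟨k, hk⟩

def gfun : ℕ → ℕ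
  | 0 => 2
  | n + 1 => n ^ 2 * (gfun n) ^ 2 + gfun n + 2

lemma gfun_pos (n : ℕ) : 0 < gfun n := by
  cases n <;> simp [gfun]

lemma gfun_mono : Monotone gfun := by
  apply monotone_nat_of_le_succ
  intro n
  show gfun n ≤ n ^ 2 * (gfun n) ^ 2 + gfun n + 2
  have : 0 ≤ n ^ 2 * (gfun n) ^ 2 := Nat.zero_le _
  omega

lemma ncard_biUnion_le {α β : Type*} (A : Finset β) (t : β → Set α) :
    (⋃ b ∈ A, t b).ncard ≤ ∑ b ∈ A, (t b).ncard := by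
  classical
  induction A using Finset.induction_on with
  | empty => simp
  | @insert a s ha ih =>
    rw [Finset.sum_insert ha, Finset.set_biUnion_insert]
    exact le_trans (Set.ncard_union_le _ _) (add_le_add le_rfl ih)

lemma ncard_prod {α β : Type*} {s : Set α} {t : Set β} (hs : s.Finite) (ht : t.Finite) :
    (s ×ˢ t).ncard = s.ncard * t.ncard := by
  rw [Set.ncard_eq_toFinset_card _ (hs.prod ht), Set.ncard_eq_toFinset_card _ hs,
    Set.ncard_eq_toFinset_card _ ht, ← Finset.card_product]
  congr 1
  exact (Set.Finite.toFinset_prod hs ht).symm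

lemma subset_biUnion_bound {α β : Type*} {A : Finset β} {t : β → Set α} {m : ℕ}
    (ht : ∀ b ∈ A, (t b).Finite ∧ (t b).ncard ≤ m) {s : Set α} (hs : s ⊆ ⋃ b ∈ A, t b) :
    s.Finite ∧ s.ncard ≤ A.card * m := by
  have hU : (⋃ b ∈ A, t b).Finite :=
    Set.Finite.biUnion A.finite_toSet (fun i hi => (ht i hi).1)
  refine ⟨hU.subset hs, ?_⟩
  calc s.ncard ≤ (⋃ b ∈ A, t b).ncard := Set.ncard_le_ncard hs hU
    _ ≤ ∑ b ∈ A, (t b).ncard := ncard_biUnion_le A t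
    _ ≤ ∑ _b ∈ A, m := Finset.sum_le_sum (fun i hi => (ht i hi).2)
    _ = A.card * m := by rw [Finset.sum_const, smul_eq_mul]

section split
variable {V : Type} {G : SimpleGraph V} {j b : ℕ}

def pref (j b : ℕ) (Q : Fin (j+1) → V) : Fin (b+1) → V :=
  fun i => Q ⟨min i.val j, by omega⟩

def suff (j b : ℕ) (Q : Fin (j+1) → V) : Fin (j-b+1) → V :=
  fun i => Q ⟨min (b + i.val) j, by omega⟩

lemma pref_apply (Q : Fin (j+1) → V) (hb : b ≤ j) (i : Fin (b+1)) :
    pref j b Q i = Q ⟨i.val, by omega⟩ := by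
  unfold pref; congr 1; exact Fin.ext (by simp; omega)

lemma suff_apply (Q : Fin (j+1) → V) (hb : b ≤ j) (i : Fin (j-b+1)) :
    suff j b Q i = Q ⟨b + i.val, by omega⟩ := by
  unfold suff; congr 1; exact Fin.ext (by simp; omega)

lemma pref_mem {x y : V} {Q : Fin (j+1) → V} (hQ : Q ∈ pathSet G j x y) (hb : b ≤ j) :
    pref j b Q ∈ pathSet G b x (Q ⟨b, by omega⟩) := by
  obtain ⟨hinj, h0, hlast, hadj⟩ := hQ
  refine ⟨?_, ?_, ?_, ?_⟩
  · intro i i' h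
    rw [pref_apply Q hb, pref_apply Q hb] at h
    have := hinj h
    exact Fin.ext (by simpa [Fin.ext_iff] using this)
  · rw [pref_apply Q hb]
    rw [show (⟨(0:Fin (b+1)).val, by omega⟩ : Fin (j+1)) = 0 from Fin.ext (by simp)]
    exact h0
  · rw [pref_apply Q hb]
    congr 1
  · intro i
    rw [pref_apply Q hb, pref_apply Q hb]
    have : i.val < j := by omega
    have h2 := path_adj hadj this
    convert h2 using 2
    all_goals exact Fin.ext rfl

lemma suff_mem {x y : V} {Q : Fin (j+1) → V} (hQ : Q ∈ pathSet G j x y) (hb : b ≤ j) :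
    suff j b Q ∈ pathSet G (j-b) (Q ⟨b, by omega⟩) y := by
  obtain ⟨hinj, h0, hlast, hadj⟩ := hQ
  refine ⟨?_, ?_, ?_, ?_⟩
  · intro i i' h
    rw [suff_apply Q hb, suff_apply Q hb] at h
    have := hinj h
    exact Fin.ext (by simp [Fin.ext_iff] at this ⊢; omega)
  · rw [suff_apply Q hb]
    congr 1
  · rw [suff_apply Q hb]
    rw [show (⟨b + (Fin.last (j-b)).val, by omega⟩ : Fin (j+1)) = Fin.last j from
      Fin.ext (by simp; omega)]
    exact hlast
  · intro i
    rw [suff_apply Q hb, suff_apply Q hb]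
    have hlt : b + i.val < j := by omega
    have h2 := path_adj hadj hlt
    convert h2 using 2
    all_goals exact Fin.ext rfl

lemma split_inj {Q1 Q2 : Fin (j+1) → V} (hb : b ≤ j)
    (h1 : pref j b Q1 = pref j b Q2) (h2 : suff j b Q1 = suff j b Q2) : Q1 = Q2 := by
  funext i
  by_cases h : i.val ≤ b
  · have := congrFun h1 ⟨i.val, by omega⟩
    rw [pref_apply Q1 hb, pref_apply Q2 hb] at this
    simpa [Fin.eta] using this
  · have := congrFun h2 ⟨i.val - b, by omega⟩
    rw [suff_apply Q1 hb, suff_apply Q2 hb] at this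
    have he : (⟨b + (i.val - b), by omega⟩ : Fin (j+1)) = i := Fin.ext (by simp; omega)
    rwa [he] at this

end split

def splice {V : Type} (j : ℕ) (P Q : Fin (j+1) → V) (k : ℕ) : V :=
  if h : k ≤ j then P ⟨k, by omega⟩ else Q ⟨2*j - k, by omega⟩

lemma splice_le {V : Type} {j : ℕ} {P Q : Fin (j+1) → V} {k : ℕ} (h : k ≤ j) :
    splice j P Q k = P ⟨k, by omega⟩ := dif_pos h

lemma splice_gt {V : Type} {j : ℕ} {P Q : Fin (j+1) → V} {k : ℕ} (h : j < k) :
    splice j P Q k = Q ⟨2*j - k, by omega⟩ := dif_neg (by omega)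

lemma exists_meet {L : Finset ℕ} {ℓ : ℕ} (hℓ1 : 1 ≤ ℓ)
    (hmin : ∀ l ∈ L, Even l → 2 * ℓ ≤ l)
    {V : Type} [DecidableEq V] {G : SimpleGraph V}
    (hG : ∀ s len, IsCycleEdges G s len → len ∈ L)
    {j : ℕ} (hj2 : 2 ≤ j) (hjl : j ≤ ℓ - 1) {x y : V} {P Q : Fin (j+1) → V}
    (hP : P ∈ pathSet G j x y) (hQ : Q ∈ pathSet G j x y) :
    ∃ a b : Fin (j+1), 1 ≤ a.val ∧ a.val ≤ j-1 ∧ 1 ≤ b.val ∧ b.val ≤ j-1 ∧ Q b = P a := by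
  by_contra hcon
  push_neg at hcon
  obtain ⟨hPi, hP0, hPl, hPa⟩ := hP
  obtain ⟨hQi, hQ0, hQl, hQa⟩ := hQ
  have ePQ0 : P ⟨0, by omega⟩ = Q ⟨0, by omega⟩ := by
    have e1 : (⟨0, by omega⟩ : Fin (j+1)) = 0 := Fin.ext (by simp)
    rw [e1, hP0, hQ0]
  have ePQj : P ⟨j, by omega⟩ = Q ⟨j, by omega⟩ := by
    have e1 : (⟨j, by omega⟩ : Fin (j+1)) = Fin.last j := Fin.ext (by simp)
    rw [e1, hPl, hQl]
  -- mixed values of the splice are distinct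
  have hmix : ∀ k1 k2 : ℕ, k1 ≤ j → j < k2 → k2 < 2*j →
      splice j P Q k1 ≠ splice j P Q k2 := by
    intro k1 k2 h1 h2 h3 he
    rw [splice_le h1, splice_gt h2] at he
    have ht1 : 1 ≤ 2*j - k2 := by omega
    have ht2 : 2*j - k2 ≤ j - 1 := by omega
    rcases Nat.lt_or_ge k1 1 with hk | hk
    · have hk0 : k1 = 0 := by omega
      subst hk0
      have h5 : Q ⟨2*j-k2, by omega⟩ = Q ⟨0, by omega⟩ := by rw [← he, ePQ0]
      have := hQi h5
      rw [Fin.ext_iff] at this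
      simp at this
      omega
    rcases Nat.lt_or_ge k1 j with hkj | hkj
    · refine hcon ⟨k1, by omega⟩ ⟨2*j-k2, by omega⟩ ?_ ?_ ?_ ?_ he.symm
      · show 1 ≤ k1; omega
      · show k1 ≤ j - 1; omega
      · show 1 ≤ 2*j - k2; omega
      · show 2*j - k2 ≤ j - 1; omega
    · have e1 : (⟨k1, by omega⟩ : Fin (j+1)) = ⟨j, by omega⟩ :=
        Fin.ext (by show k1 = j; omega)
      rw [e1, ePQj] at he
      have h6 : j = 2*j - k2 := by simpa [Fin.ext_iff] using hQi he
      omega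
  -- injectivity of the splice on [0, 2j)
  have hsinj : ∀ k1 k2 : ℕ, k1 < 2*j → k2 < 2*j →
      splice j P Q k1 = splice j P Q k2 → k1 = k2 := by
    intro k1 k2 h1 h2 he
    rcases le_or_gt k1 j with c1 | c1 <;> rcases le_or_gt k2 j with c2 | c2
    · rw [splice_le c1, splice_le c2] at he
      have := hPi he
      rw [Fin.ext_iff] at this; simpa using this
    · exact absurd he (hmix k1 k2 c1 c2 h2)
    · exact absurd he.symm (hmix k2 k1 c2 c1 h1)
    · rw [splice_gt c1, splice_gt c2] at he
      have := hQi he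
      rw [Fin.ext_iff] at this; simp at this; omega
  -- adjacency of consecutive splice values
  have hadj' : ∀ k : ℕ, k < 2*j →
      G.Adj (splice j P Q k) (splice j P Q ((k+1) % (2*j))) := by
    intro k hk
    by_cases hke : k + 1 = 2*j
    · rw [show (k+1) % (2*j) = 0 by rw [hke]; exact Nat.mod_self _]
      rw [splice_gt (by omega), splice_le (by omega), ePQ0]
      rw [show (⟨2*j-k, by omega⟩ : Fin (j+1)) = ⟨0+1, by omega⟩ from
        Fin.ext (by show 2*j-k = 0+1; omega)]
      exact (path_adj hQa (show 0 < j by omega)).symm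
    · rw [Nat.mod_eq_of_lt (by omega)]
      rcases le_or_gt (k+1) j with c | c
      · rw [splice_le (by omega), splice_le c]
        exact path_adj hPa (by omega)
      · rcases le_or_gt k j with c2 | c2
        · rw [splice_le c2, splice_gt c]
          rw [show (⟨k, by omega⟩ : Fin (j+1)) = ⟨j, by omega⟩ from
            Fin.ext (by show k = j; omega), ePQj]
          rw [show (⟨j, by omega⟩ : Fin (j+1)) = ⟨j-1+1, by omega⟩ from
            Fin.ext (by show j = j-1+1; omega)]
          rw [show (⟨2*j-(k+1), by omega⟩ : Fin (j+1)) = ⟨j-1, by omega⟩ from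
            Fin.ext (by show 2*j-(k+1) = j-1; omega)]
          exact (path_adj hQa (show j-1 < j by omega)).symm
        · rw [splice_gt c2, splice_gt (by omega)]
          rw [show (⟨2*j-k, by omega⟩ : Fin (j+1)) = ⟨2*j-(k+1)+1, by omega⟩ from
            Fin.ext (by show 2*j-k = 2*j-(k+1)+1; omega)]
          exact (path_adj hQa (show 2*j-(k+1) < j by omega)).symm
  -- build the cycle
  haveI : NeZero (2*j - 3 + 3) := ⟨by omega⟩
  have h2j : 2*j ∈ L := by
    refine hG (Finset.image (fun i => s(splice j P Q i.val,
        splice j P Q (i+1).val)) (Finset.univ : Finset (ZMod (2*j-3+3)))) (2*j)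
      ⟨2*j - 3, by omega, fun i => splice j P Q i.val, ?_, ?_, rfl⟩
    · intro i i' h
      have h1 := ZMod.val_lt i
      have h2 := ZMod.val_lt i'
      have := hsinj i.val i'.val (by omega) (by omega) h
      exact ZMod.val_injective _ this
    · intro i
      have hv : (i+1).val = (i.val + 1) % (2*j-3+3) := by
        rw [ZMod.val_add, ZMod.val_one_eq_one_mod]
        congr 1
      have hv2 : (i.val + 1) % (2*j-3+3) = (i.val + 1) % (2*j) := by
        congr 1; omega
      show G.Adj (splice j P Q i.val) (splice j P Q (i+1).val)
      rw [hv, hv2]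
      exact hadj' i.val (by have := ZMod.val_lt i; omega)
  have := hmin (2*j) h2j ⟨j, by ring⟩
  omega

lemma key (L : Finset ℕ) (ℓ : ℕ) (hℓ1 : 1 ≤ ℓ)
    (hmin : ∀ l ∈ L, Even l → 2 * ℓ ≤ l) (j : ℕ) :
    ∀ (V : Type) (_ : DecidableEq V) (G : SimpleGraph V),
      (∀ s len, IsCycleEdges G s len → len ∈ L) →
      1 ≤ j → j ≤ ℓ - 1 → ∀ x y : V,
      (pathSet G j x y).Finite ∧ (pathSet G j x y).ncard < gfun j := by
  induction j using Nat.strong_induction_on with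
  | _ j ih =>
  intro V instV G hG hj1 hjl x y
  rcases Nat.lt_or_ge j 2 with hj2 | hj2
  · -- base case j = 1
    have hj : j = 1 := by omega
    subst hj
    have hsub : pathSet G 1 x y ⊆ {fun i : Fin 2 => if i = 0 then x else y} := by
      intro f hf
      obtain ⟨hfi, hf0, hfl, hfa⟩ := hf
      simp only [Set.mem_singleton_iff]
      funext i
      fin_cases i
      · simpa using hf0
      · have h1 : (Fin.last 1) = (1 : Fin 2) := rfl
        rw [h1] at hfl
        simpa using hfl
    constructor
    · exact (Set.finite_singleton _).subset hsub
    · have h2 := Set.ncard_le_ncard hsub (Set.finite_singleton _)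
      rw [Set.ncard_singleton] at h2
      have h4 : gfun 1 = 4 := by simp [gfun]
      omega
  · -- inductive step, j ≥ 2
    by_cases hne : (pathSet G j x y).Nonempty
    swap
    · rw [Set.not_nonempty_iff_eq_empty] at hne
      rw [hne]
      refine ⟨Set.finite_empty, ?_⟩
      simpa using gfun_pos j
    obtain ⟨P, hP⟩ := hne
    set A : Finset (ℕ × ℕ) := Finset.Icc 1 (j-1) ×ˢ Finset.Icc 1 (j-1) with hA
    set T : ℕ × ℕ → Set (Fin (j+1) → V) := fun p =>
      {Q | Q ∈ pathSet G j x y ∧ Q ⟨min p.2 j, by omega⟩ = P ⟨min p.1 j, by omega⟩}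
      with hT
    have hcover : pathSet G j x y ⊆ ⋃ p ∈ A, T p := by
      intro Q hQ
      obtain ⟨a, b, ha1, ha2, hb1, hb2, hab⟩ :=
        exists_meet hℓ1 hmin hG hj2 hjl hP hQ
      refine Set.mem_iUnion.mpr ⟨(a.val, b.val), Set.mem_iUnion.mpr ⟨?_, hQ, ?_⟩⟩
      · simp only [hA, Finset.mem_product, Finset.mem_Icc]
        omega
      · have e1 : (⟨min ((a.val, b.val)).2 j, by omega⟩ : Fin (j+1)) = b :=
          Fin.ext (by show min b.val j = b.val; omega)
        have e2 : (⟨min ((a.val, b.val)).1 j, by omega⟩ : Fin (j+1)) = a :=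
          Fin.ext (by show min a.val j = a.val; omega)
        rw [e1, e2]
        exact hab
    have hTbound : ∀ p ∈ A, (T p).Finite ∧ (T p).ncard ≤ gfun (j-1) * gfun (j-1) := by
      intro p hp
      obtain ⟨a, b⟩ := p
      simp only [hA, Finset.mem_product, Finset.mem_Icc] at hp
      obtain ⟨⟨ha1, ha2⟩, hb1, hb2⟩ := hp
      have hbj : b ≤ j := by omega
      set v : V := P ⟨min a j, by omega⟩ with hv
      have hmem : ∀ Q ∈ T (a, b),
          pref j b Q ∈ pathSet G b x v ∧ suff j b Q ∈ pathSet G (j-b) v y := by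
        intro Q hQ
        obtain ⟨hQp, hQv⟩ := hQ
        have e1 : (⟨min ((a,b)).2 j, by omega⟩ : Fin (j+1)) = ⟨b, by omega⟩ :=
          Fin.ext (by show min b j = b; omega)
        rw [e1] at hQv
        constructor
        · have := pref_mem hQp hbj
          rwa [hQv] at this
        · have := suff_mem hQp hbj
          rwa [hQv] at this
      have h1 := ih b (by omega) V instV G hG (by omega) (by omega) x v
      have h2 := ih (j-b) (by omega) V instV G hG (by omega) (by omega) v y
      have hprodfin : (pathSet G b x v ×ˢ pathSet G (j-b) v y).Finite := h1.1.prod h2.1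
      have hmaps : ∀ Q ∈ T (a, b), (pref j b Q, suff j b Q) ∈
          pathSet G b x v ×ˢ pathSet G (j-b) v y := by
        intro Q hQ
        exact Set.mk_mem_prod (hmem Q hQ).1 (hmem Q hQ).2
      have hinj : Set.InjOn (fun Q => (pref j b Q, suff j b Q)) (T (a, b)) := by
        intro Q1 _ Q2 _ h
        have h1' : pref j b Q1 = pref j b Q2 := congrArg Prod.fst h
        have h2' : suff j b Q1 = suff j b Q2 := congrArg Prod.snd h
        exact split_inj hbj h1' h2'
      constructor
      · exact Set.Finite.of_finite_image ((hprodfin.subset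
          (Set.image_subset_iff.mpr hmaps)))  hinj
      · calc (T (a,b)).ncard ≤ (pathSet G b x v ×ˢ pathSet G (j-b) v y).ncard :=
              Set.ncard_le_ncard_of_injOn _ hmaps hinj hprodfin
          _ = (pathSet G b x v).ncard * (pathSet G (j-b) v y).ncard :=
              ncard_prod h1.1 h2.1
          _ ≤ gfun (j-1) * gfun (j-1) := by
              have hb' : gfun b ≤ gfun (j-1) := gfun_mono (by omega)
              have hjb' : gfun (j-b) ≤ gfun (j-1) := gfun_mono (by omega)
              exact Nat.mul_le_mul (le_of_lt (lt_of_lt_of_le h1.2 hb'))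
                (le_of_lt (lt_of_lt_of_le h2.2 hjb'))
    obtain ⟨hfin, hcard⟩ := subset_biUnion_bound hTbound hcover
    refine ⟨hfin, ?_⟩
    have hAcard : A.card = (j-1) * (j-1) := by
      simp [hA, Nat.card_Icc]
    rw [hAcard] at hcard
    have hgj : gfun (j-1+1) = (j-1)^2 * (gfun (j-1))^2 + gfun (j-1) + 2 := rfl
    rw [show j-1+1 = j by omega] at hgj
    have hring : (j-1)^2 * (gfun (j-1))^2 = ((j-1)*(j-1)) * (gfun (j-1) * gfun (j-1)) := by
      ring
    omega

theorem stmt_17 (L : Finset ℕ) (hLpos : ∀ l ∈ L, 0 < l) (ℓ : ℕ)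
    (hl : 2 * ℓ ∈ L) (hmin : ∀ l ∈ L, Even l → 2 * ℓ ≤ l) :
    ∃ c : ℕ, ∀ (V : Type) (_ : DecidableEq V) (G : SimpleGraph V),
      (∀ s len, IsCycleEdges G s len → len ∈ L) →
      ∀ (x y : V) (j : ℕ), 1 ≤ j → j ≤ ℓ - 1 →
      {f : Fin (j + 1) → V | Function.Injective f ∧ f 0 = x ∧
        f (Fin.last j) = y ∧
        ∀ i : Fin j, G.Adj (f i.castSucc) (f i.succ)}.ncard < c := by
  have hℓ1 : 1 ≤ ℓ := by
    have := hLpos _ hl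
    omega
  refine ⟨gfun (ℓ - 1), ?_⟩
  intro V instV G hG x y j hj1 hjl
  have h := (key L ℓ hℓ1 hmin j V instV G hG hj1 hjl x y).2
  exact lt_of_lt_of_le h (gfun_mono hjl)
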